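/- Let F_1, ..., F_K : R^d → R be differentiable convex functions, H a symmetric positive definite matrix, and ψ_t ∈ R^d. Suppose there exists ψ̂ with F_k(ψ̂) + ζ < d_k for all k, where ζ > 0. Define c_k = min(√(2ε g_k^T H^{-1} g_k), F_k(ψ_t) - d_k + ζ) with g_k = ∇F_k(ψ_t) and ε > 0. Then the feasible set {g : g_k^T g + c_k ≤ 0 for all k} is nonempty and convex, and the quadratic program minimize (1/2) g^T H g subject to g_k^T g + c_k ≤ 0 for all k has a unique solution. -/

import Mathlib

open RealInnerProductSpace

section AuxQP

variable {n : ℕ}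

lemma quadQP_pos {H : Matrix (Fin n) (Fin n) ℝ} (hH : H.PosDef)
    {x : EuclideanSpace ℝ (Fin n)} (hx : x ≠ 0) :
    0 < ⟪x, Matrix.toEuclideanLin H x⟫ := by
  have h := hH.re_dotProduct_pos (x := (WithLp.equiv 2 _ x)) (by simpa using hx)
  simpa [Matrix.toEuclideanLin_apply, PiLp.inner_apply, dotProduct, mul_comm] using h

lemma gradQP_ineq (f : EuclideanSpace ℝ (Fin n) → ℝ) (hf : Differentiable ℝ f)
    (hc : ConvexOn ℝ Set.univ f) (x y : EuclideanSpace ℝ (Fin n)) :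
    ⟪gradient f x, y - x⟫ ≤ f y - f x := by
  set φ : ℝ → ℝ := fun t => f (x + t • (y - x)) with hφ
  have hA : ConvexOn ℝ Set.univ φ := by
    have h := hc.comp_affineMap (AffineMap.lineMap x y : ℝ →ᵃ[ℝ] _)
    have he : (f ∘ (AffineMap.lineMap x y : ℝ →ᵃ[ℝ] _)) = φ := by
      funext t
      simp [φ, AffineMap.lineMap_apply, add_comm]
    rw [he] at h
    simpa using h
  have hline : HasDerivAt (fun t : ℝ => x + t • (y - x)) (y - x) 0 := by
    simpa using ((hasDerivAt_id (0:ℝ)).smul_const (y - x)).const_add x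
  have hφ' : HasDerivAt φ (fderiv ℝ f x (y - x)) 0 := by
    have h1 : HasFDerivAt f (fderiv ℝ f x) (x + (0:ℝ) • (y - x)) := by
      simpa using (hf x).hasFDerivAt
    exact h1.comp_hasDerivAt 0 hline
  have hsl := hA.le_slope_of_hasDerivAt (Set.mem_univ (0:ℝ)) (Set.mem_univ 1) zero_lt_one hφ'
  have hs : slope φ 0 1 = f y - f x := by
    simp [slope, φ]
  rw [hs] at hsl
  have hg : ⟪gradient f x, y - x⟫ = fderiv ℝ f x (y - x) := by
    simp [gradient, InnerProductSpace.toDual_symm_apply]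
  linarith [hg ▸ hsl]

lemma quadQP_combo (T : EuclideanSpace ℝ (Fin n) →ₗ[ℝ] EuclideanSpace ℝ (Fin n))
    (a b : ℝ) (hab : a + b = 1) (x y : EuclideanSpace ℝ (Fin n)) :
    ⟪a • x + b • y, T (a • x + b • y)⟫ =
      a * ⟪x, T x⟫ + b * ⟪y, T y⟫ - a * b * ⟪x - y, T (x - y)⟫ := by
  have hb : b = 1 - a := by linarith
  subst hb
  simp only [map_add, map_smul, map_sub, inner_add_left, inner_add_right,
    inner_sub_left, inner_sub_right, real_inner_smul_left, real_inner_smul_right]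
  ring

lemma quadQP_coercive {H : Matrix (Fin n) (Fin n) ℝ} (hH : H.PosDef) :
    ∃ m : ℝ, 0 < m ∧ ∀ x : EuclideanSpace ℝ (Fin n),
      m * ‖x‖ ^ 2 ≤ ⟪x, Matrix.toEuclideanLin H x⟫ := by
  set T := Matrix.toEuclideanLin H with hT
  have hquad : ∀ x : EuclideanSpace ℝ (Fin n), x ≠ 0 → 0 < ⟪x, T x⟫ :=
    fun x hx => quadQP_pos hH hx
  have hTc : Continuous T := T.continuous_of_finiteDimensional
  have hQc : Continuous fun x : EuclideanSpace ℝ (Fin n) => ⟪x, T x⟫ :=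
    continuous_id.inner hTc
  rcases eq_or_ne n 0 with hn | hn
  · refine ⟨1, one_pos, fun x => ?_⟩
    subst hn
    have hx0 : x = 0 := Subsingleton.elim x 0
    simp [hx0]
  · have hsne : (Metric.sphere (0 : EuclideanSpace ℝ (Fin n)) 1).Nonempty := by
      have : Nontrivial (EuclideanSpace ℝ (Fin n)) := by
        have : Nonempty (Fin n) := ⟨⟨0, Nat.pos_of_ne_zero hn⟩⟩
        infer_instance
      exact NormedSpace.sphere_nonempty.2 (by norm_num)
    obtain ⟨z, hz, hzmin⟩ := (isCompact_sphere (0 : EuclideanSpace ℝ (Fin n)) 1).exists_isMinOn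
      hsne hQc.continuousOn
    have hznorm : ‖z‖ = 1 := by simpa using hz
    have hz0 : z ≠ 0 := by
      intro h; rw [h] at hznorm; simp at hznorm
    refine ⟨⟪z, T z⟫, hquad z hz0, fun x => ?_⟩
    rcases eq_or_ne x 0 with rfl | hx
    · simp
    · have hxn : (0:ℝ) < ‖x‖ := norm_pos_iff.2 hx
      set u : EuclideanSpace ℝ (Fin n) := ‖x‖⁻¹ • x with hu
      have hus : u ∈ Metric.sphere (0 : EuclideanSpace ℝ (Fin n)) 1 := by
        simp [hu, norm_smul, abs_of_pos (inv_pos.2 hxn), inv_mul_cancel₀ hxn.ne']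
      have hmin := hzmin hus
      simp only [Set.mem_setOf_eq] at hmin
      have hscale : ⟪u, T u⟫ = ‖x‖⁻¹ ^ 2 * ⟪x, T x⟫ := by
        rw [hu, map_smul, real_inner_smul_left, real_inner_smul_right]
        ring
      rw [hscale] at hmin
      have hx2 : (0:ℝ) < ‖x‖ ^ 2 := by positivity
      calc ⟪z, T z⟫ * ‖x‖ ^ 2 ≤ (‖x‖⁻¹ ^ 2 * ⟪x, T x⟫) * ‖x‖ ^ 2 := by nlinarith
        _ = ⟪x, T x⟫ := by field_simp

end AuxQP

/-- Feasibility, convexity, and unique solvability of the gradient-integration QP: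
with convex differentiable constraints `F k`, a strictly feasible point `ψ̂`,
symmetric positive definite `H`, and truncated thresholds
`c k = min (√(2ε gₖᵀH⁻¹gₖ)) (Fₖ(ψₜ) - dₖ + ζ)`, the constraint set
`{g | gₖᵀ g + cₖ ≤ 0 ∀k}` is nonempty and convex, and the QP
`minimize (1/2) gᵀ H g` over it has a unique solution. -/
theorem stmt_1 {n K : ℕ} (F : Fin K → EuclideanSpace ℝ (Fin n) → ℝ)
    (hdiff : ∀ k, Differentiable ℝ (F k))
    (hconv : ∀ k, ConvexOn ℝ Set.univ (F k))
    (H : Matrix (Fin n) (Fin n) ℝ) (hH : H.PosDef)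
    (ψt : EuclideanSpace ℝ (Fin n)) (dk : Fin K → ℝ) (ζ ε : ℝ)
    (hζ : 0 < ζ) (hε : 0 < ε)
    (hfeas : ∃ ψhat : EuclideanSpace ℝ (Fin n), ∀ k, F k ψhat + ζ < dk k) :
    let g : Fin K → EuclideanSpace ℝ (Fin n) := fun k => gradient (F k) ψt
    let c : Fin K → ℝ := fun k =>
      min (Real.sqrt (2 * ε * ⟪g k, Matrix.toEuclideanLin H⁻¹ (g k)⟫))
        (F k ψt - dk k + ζ)
    let feasSet : Set (EuclideanSpace ℝ (Fin n)) :=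
      {x | ∀ k, ⟪g k, x⟫ + c k ≤ 0}
    feasSet.Nonempty ∧ Convex ℝ feasSet ∧
      ∃! x : EuclideanSpace ℝ (Fin n), x ∈ feasSet ∧
        ∀ y ∈ feasSet,
          (1 / 2) * ⟪x, Matrix.toEuclideanLin H x⟫ ≤
            (1 / 2) * ⟪y, Matrix.toEuclideanLin H y⟫ := by
  intro g c feasSet
  obtain ⟨ψh, hψh⟩ := hfeas
  set T := Matrix.toEuclideanLin H with hT
  set Q : EuclideanSpace ℝ (Fin n) → ℝ := fun x => ⟪x, T x⟫ with hQ
  -- Feasibility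
  have hx0 : (ψh - ψt) ∈ feasSet := by
    intro k
    have h1 : ⟪g k, ψh - ψt⟫ ≤ F k ψh - F k ψt :=
      gradQP_ineq (F k) (hdiff k) (hconv k) ψt ψh
    have h2 : c k ≤ F k ψt - dk k + ζ := min_le_right _ _
    have h3 := hψh k
    show ⟪g k, ψh - ψt⟫ + c k ≤ 0
    linarith
  have hne : feasSet.Nonempty := ⟨ψh - ψt, hx0⟩
  -- Convexity
  have hconvS : Convex ℝ feasSet := by
    intro x hx y hy a b ha hb hab
    intro k
    have hxk := hx k
    have hyk := hy k
    show ⟪g k, a • x + b • y⟫ + c k ≤ 0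
    have hlin : ⟪g k, a • x + b • y⟫ = a * ⟪g k, x⟫ + b * ⟪g k, y⟫ := by
      rw [inner_add_right, real_inner_smul_right, real_inner_smul_right]
    have h1 := mul_le_mul_of_nonneg_left hxk ha
    have h2 := mul_le_mul_of_nonneg_left hyk hb
    have hck : a * c k + b * c k = c k := by
      rw [← add_mul, hab, one_mul]
    rw [hlin]
    nlinarith
  -- Closedness
  have hcl : IsClosed feasSet := by
    have hfe : feasSet = ⋂ k, {x : EuclideanSpace ℝ (Fin n) | ⟪g k, x⟫ + c k ≤ 0} := by
      ext x
      simp [feasSet, Set.mem_iInter]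
    rw [hfe]
    exact isClosed_iInter fun k => isClosed_le
      ((continuous_const.inner continuous_id).add continuous_const) continuous_const
  -- Coercivity and existence of a minimizer
  obtain ⟨m, hm, hcoer⟩ := quadQP_coercive hH
  have hQc : Continuous Q := continuous_id.inner T.continuous_of_finiteDimensional
  set x0 : EuclideanSpace ℝ (Fin n) := ψh - ψt with hx0def
  have hQ0 : 0 ≤ Q x0 := le_trans (by positivity) (hcoer x0)
  set R : ℝ := Real.sqrt (Q x0 / m) + 1 with hRdef
  have hsq : Real.sqrt (Q x0 / m) ^ 2 = Q x0 / m := Real.sq_sqrt (div_nonneg hQ0 hm.le)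
  have hR0 : 0 < R := by positivity
  have hRQ : Q x0 < m * R ^ 2 := by
    have h1 : Q x0 / m < R ^ 2 := by
      nlinarith [Real.sqrt_nonneg (Q x0 / m)]
    calc Q x0 = m * (Q x0 / m) := by field_simp
      _ < m * R ^ 2 := by nlinarith
  set S' := feasSet ∩ Metric.closedBall 0 R with hS'def
  have hS'c : IsCompact S' := (isCompact_closedBall (0 : EuclideanSpace ℝ (Fin n)) R).inter_left hcl
  have hx0S' : x0 ∈ S' := by
    refine ⟨hx0, ?_⟩
    rw [Metric.mem_closedBall, dist_zero_right]
    have h1 : m * ‖x0‖ ^ 2 ≤ Q x0 := hcoer x0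
    have h2 : ‖x0‖ ^ 2 ≤ Q x0 / m := by
      rw [le_div_iff₀ hm]
      linarith [mul_comm m (‖x0‖ ^ 2)]
    have h3 : ‖x0‖ ≤ Real.sqrt (Q x0 / m) := by
      have := Real.sqrt_le_sqrt h2
      simpa [Real.sqrt_sq (norm_nonneg x0)] using this
    rw [hRdef]
    linarith
  obtain ⟨z, hzS', hzmin⟩ := hS'c.exists_isMinOn ⟨x0, hx0S'⟩ hQc.continuousOn
  have hzx0 : Q z ≤ Q x0 := hzmin hx0S'
  have hzmin' : ∀ y ∈ feasSet, Q z ≤ Q y := by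
    intro y hy
    by_cases hyR : ‖y‖ ≤ R
    · exact hzmin ⟨hy, by rw [Metric.mem_closedBall, dist_zero_right]; exact hyR⟩
    · push_neg at hyR
      have h1 : m * ‖y‖ ^ 2 ≤ Q y := hcoer y
      have hy2 : R ^ 2 < ‖y‖ ^ 2 := by nlinarith
      have h4 : m * R ^ 2 ≤ m * ‖y‖ ^ 2 := by nlinarith
      linarith
  refine ⟨hne, hconvS, ⟨z, ⟨hzS'.1, fun y hy => ?_⟩, ?_⟩⟩
  · have := hzmin' y hy
    simp only [hQ] at this
    linarith
  · rintro w ⟨hwS, hwmin⟩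
    by_contra hne'
    have hQwz : ⟪w, T w⟫ = ⟪z, T z⟫ := by
      have h1 := hwmin z hzS'.1
      have h2 : ⟪z, T z⟫ ≤ ⟪w, T w⟫ := hzmin' w hwS
      linarith
    have hmid : (1/2 : ℝ) • w + (1/2 : ℝ) • z ∈ feasSet :=
      hconvS hwS hzS'.1 (by norm_num) (by norm_num) (by norm_num)
    have hpos : 0 < ⟪w - z, T (w - z)⟫ := quadQP_pos hH (sub_ne_zero.2 hne')
    have hlt : Q ((1/2 : ℝ) • w + (1/2 : ℝ) • z) < Q z := by
      have hcmb := quadQP_combo T (1/2) (1/2) (by norm_num) w z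
      show ⟪(1/2 : ℝ) • w + (1/2 : ℝ) • z, T ((1/2 : ℝ) • w + (1/2 : ℝ) • z)⟫ < ⟪z, T z⟫
      rw [hcmb, hQwz]
      linarith
    have := hzmin' _ hmid
    linarith
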